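/- Let H be a complex Hilbert space, J : H → H a conjugate-linear isometric involution, and Δ a bounded positive invertible self-adjoint operator with J ∘ Δ ∘ J = Δ⁻¹; let √Δ be the positive square root of Δ and Δ^{it} the unitary obtained by continuous functional calculus from x ↦ x^{it}. Suppose ψ₁, ψ₂ ∈ H are fixed by the Tomita involution S = J ∘ √Δ, i.e. J(√Δ ψ_j) = ψ_j for j = 1, 2. Then for every real t the KMS boundary condition holds: ⟨ψ₂, Δ^{it}(Δ ψ₁)⟩ = ⟨Δ^{it} ψ₁, ψ₂⟩, where ⟨·,·⟩ is the inner product taken linear in its second argument. -/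

import Mathlib

set_option linter.unusedSectionVars false
set_option maxHeartbeats 1000000

section auxKMS

variable {H : Type*} [NormedAddCommGroup H] [InnerProductSpace ℂ H] [CompleteSpace H]
variable (J : H → H)

noncomputable def Jc (hJadd : ∀ x y : H, J (x + y) = J x + J y)
    (hJsmul : ∀ (c : ℂ) (x : H), J (c • x) = (starRingEnd ℂ) c • J x)
    (hJnorm : ∀ x : H, ‖J x‖ = ‖x‖) (T : H →L[ℂ] H) : H →L[ℂ] H :=
  LinearMap.mkContinuous
    { toFun := fun x => J (T (J x))
      map_add' := fun x y => by
        show J (T (J (x + y))) = J (T (J x)) + J (T (J y))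
        rw [hJadd, map_add, hJadd]
      map_smul' := fun c x => by
        show J (T (J (c • x))) = (RingHom.id ℂ) c • J (T (J x))
        rw [hJsmul, map_smul, hJsmul]; simp }
    ‖T‖ (fun x => by
      show ‖J (T (J x))‖ ≤ ‖T‖ * ‖x‖
      rw [hJnorm]
      calc ‖T (J x)‖ ≤ ‖T‖ * ‖J x‖ := T.le_opNorm _
        _ = ‖T‖ * ‖x‖ := by rw [hJnorm])

variable (hJinv : ∀ x : H, J (J x) = x)
    (hJadd : ∀ x y : H, J (x + y) = J x + J y)
    (hJsmul : ∀ (c : ℂ) (x : H), J (c • x) = (starRingEnd ℂ) c • J x)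
    (hJnorm : ∀ x : H, ‖J x‖ = ‖x‖)

@[simp] lemma Jc_apply (T : H →L[ℂ] H) (x : H) :
    Jc J hJadd hJsmul hJnorm T x = J (T (J x)) := rfl

include hJinv in
lemma Jc_mul (T S : H →L[ℂ] H) :
    Jc J hJadd hJsmul hJnorm (T * S) = Jc J hJadd hJsmul hJnorm T * Jc J hJadd hJsmul hJnorm S := by
  ext x; simp [ContinuousLinearMap.mul_apply, hJinv]

include hJinv in
lemma Jc_one : Jc J hJadd hJsmul hJnorm (1 : H →L[ℂ] H) = 1 := by
  ext x; simp [hJinv]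

lemma Jc_zero : Jc J hJadd hJsmul hJnorm (0 : H →L[ℂ] H) = 0 := by
  have h0 : J 0 = 0 := by
    have := hJsmul 0 0; simpa using this
  ext x; simp [h0]

lemma Jc_add (T S : H →L[ℂ] H) :
    Jc J hJadd hJsmul hJnorm (T + S) = Jc J hJadd hJsmul hJnorm T + Jc J hJadd hJsmul hJnorm S := by
  ext x; simp [hJadd]

lemma Jc_smul (c : ℂ) (T : H →L[ℂ] H) :
    Jc J hJadd hJsmul hJnorm (c • T) = (starRingEnd ℂ) c • Jc J hJadd hJsmul hJnorm T := by
  ext x; simp [hJsmul]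

lemma Jc_sub (T S : H →L[ℂ] H) :
    Jc J hJadd hJsmul hJnorm (T - S) = Jc J hJadd hJsmul hJnorm T - Jc J hJadd hJsmul hJnorm S := by
  have := Jc_smul J hJadd hJsmul hJnorm (-1) S
  simp only [sub_eq_add_neg, ← neg_one_smul ℂ S, ← neg_one_smul ℂ (Jc J hJadd hJsmul hJnorm S)]
  rw [Jc_add J hJadd hJsmul hJnorm, this]
  simp

include hJinv in
lemma Jc_algebraMap (c : ℂ) :
    Jc J hJadd hJsmul hJnorm (algebraMap ℂ (H →L[ℂ] H) c) =
      algebraMap ℂ (H →L[ℂ] H) ((starRingEnd ℂ) c) := by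
  rw [Algebra.algebraMap_eq_smul_one, Algebra.algebraMap_eq_smul_one,
    Jc_smul J hJadd hJsmul hJnorm, Jc_one J hJinv hJadd hJsmul hJnorm]

lemma Jc_norm_le (T : H →L[ℂ] H) : ‖Jc J hJadd hJsmul hJnorm T‖ ≤ ‖T‖ :=
  LinearMap.mkContinuous_norm_le _ (norm_nonneg T) _

lemma Jc_continuous : Continuous (Jc J hJadd hJsmul hJnorm) := by
  have : LipschitzWith 1 (Jc J hJadd hJsmul hJnorm) := by
    refine LipschitzWith.of_dist_le_mul fun X Y => ?_
    rw [dist_eq_norm, dist_eq_norm, ← Jc_sub J hJadd hJsmul hJnorm]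
    simpa using Jc_norm_le J hJadd hJsmul hJnorm (X - Y)
  exact this.continuous

include hJinv in
lemma Jc_star (hJinner : ∀ x y : H, (inner ℂ (J x) (J y) : ℂ) = (starRingEnd ℂ) (inner ℂ x y : ℂ))
    (T : H →L[ℂ] H) :
    Jc J hJadd hJsmul hJnorm (star T) = star (Jc J hJadd hJsmul hJnorm T) := by
  rw [ContinuousLinearMap.star_eq_adjoint, ContinuousLinearMap.star_eq_adjoint,
    ContinuousLinearMap.eq_adjoint_iff]
  intro x y
  calc (inner ℂ (J ((ContinuousLinearMap.adjoint T) (J x))) y : ℂ)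
      = inner ℂ (J ((ContinuousLinearMap.adjoint T) (J x))) (J (J y)) := by rw [hJinv]
    _ = (starRingEnd ℂ) (inner ℂ ((ContinuousLinearMap.adjoint T) (J x)) (J y)) := hJinner _ _
    _ = (starRingEnd ℂ) (inner ℂ (J x) (T (J y))) := by
        rw [ContinuousLinearMap.adjoint_inner_left]
    _ = inner ℂ (J (J x)) (J (T (J y))) := (hJinner _ _).symm
    _ = inner ℂ x (J (T (J y))) := by rw [hJinv]

include hJinv in
lemma Jc_isUnit (T : H →L[ℂ] H) (h : IsUnit T) : IsUnit (Jc J hJadd hJsmul hJnorm T) := by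
  obtain ⟨B, hB1, hB2⟩ := isUnit_iff_exists.mp h
  refine isUnit_iff_exists.mpr ⟨Jc J hJadd hJsmul hJnorm B, ?_, ?_⟩
  · rw [← Jc_mul J hJinv hJadd hJsmul hJnorm, hB1, Jc_one J hJinv hJadd hJsmul hJnorm]
  · rw [← Jc_mul J hJinv hJadd hJsmul hJnorm, hB2, Jc_one J hJinv hJadd hJsmul hJnorm]

include hJinv in
/-- The key conjugation identity: `J ∘ cfc g Δ ∘ J = cfc g Δ` whenever
`conj (g ∘ inv) = g` on the spectrum. -/
lemma aux_conj (hJinner : ∀ x y : H, (inner ℂ (J x) (J y) : ℂ) = (starRingEnd ℂ) (inner ℂ x y : ℂ))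
    (Δ Δinv : H →L[ℂ] H) (hΔsa : IsSelfAdjoint Δ)
    (h1 : Δ * Δinv = 1) (h2 : Δinv * Δ = 1)
    (hmod : ∀ x : H, J (Δ (J x)) = Δinv x)
    (g : ℂ → ℂ) (hg : ContinuousOn g (spectrum ℂ Δ))
    (hgc : ∀ z ∈ spectrum ℂ Δ, (starRingEnd ℂ) (g z⁻¹) = g z) :
    Jc J hJadd hJsmul hJnorm (cfc g Δ) = cfc g Δ := by
  have hΔn : IsStarNormal Δ := hΔsa.isStarNormal
  set S := spectrum ℂ Δ with hS
  -- spectrum facts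
  have hz0 : ∀ z ∈ S, z ≠ 0 := by
    intro z hz h0
    exact spectrum.zero_notMem ℂ (isUnit_iff_exists.mpr ⟨Δinv, h1, h2⟩) (h0 ▸ hz)
  have hreal : ∀ z ∈ S, z = (z.re : ℂ) := fun z hz => hΔsa.mem_spectrum_eq_re hz
  have hJcΔ : Jc J hJadd hJsmul hJnorm Δ = Δinv := by ext x; exact hmod x
  have hJcΔinv : Jc J hJadd hJsmul hJnorm Δinv = Δ := by
    ext x
    have h5 := hmod (J x)
    rw [hJinv] at h5
    rw [Jc_apply, ← h5, hJinv]
  -- inversion invariance of the spectrum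
  have hSinv : ∀ z ∈ S, z⁻¹ ∈ S := by
    intro z hz
    set u : (H →L[ℂ] H)ˣ := ⟨Δ, Δinv, h1, h2⟩ with hu
    have h3 : z⁻¹ ∈ spectrum ℂ Δinv := (spectrum.inv₀_mem_inv_iff (a := u)).mpr hz
    have hconj : (starRingEnd ℂ) z⁻¹ = z⁻¹ := by
      rw [hreal z hz]
      rw [← Complex.ofReal_inv, Complex.conj_ofReal]
    by_contra hc
    have hunit : IsUnit (algebraMap ℂ (H →L[ℂ] H) z⁻¹ - Δ) := by
      rw [hS, spectrum.notMem_iff] at hc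
      exact hc
    have := Jc_isUnit J hJinv hJadd hJsmul hJnorm _ hunit
    rw [Jc_sub J hJadd hJsmul hJnorm, Jc_algebraMap J hJinv hJadd hJsmul hJnorm,
      hJcΔ, hconj] at this
    rw [spectrum.mem_iff] at h3
    exact h3 this
  -- the inversion homeomorphism of the spectrum
  have hcont : Continuous fun z : S => ((z : ℂ)⁻¹) :=
    continuous_subtype_val.inv₀ (fun z => hz0 z z.2)
  set ρc : C(S, S) := ⟨fun z => ⟨(z : ℂ)⁻¹, hSinv z z.2⟩, hcont.subtype_mk _⟩ with hρc
  -- the competing star algebra homomorphism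
  set ψ : C(S, ℂ) →⋆ₐ[ℂ] (H →L[ℂ] H) :=
    { toFun := fun q => Jc J hJadd hJsmul hJnorm (cfcHom hΔn ((star q).comp ρc))
      map_one' := by
        show Jc J hJadd hJsmul hJnorm ((cfcHom hΔn) ((star (1 : C(S, ℂ))).comp ρc)) = 1
        rw [star_one, ContinuousMap.one_comp, map_one, Jc_one J hJinv hJadd hJsmul hJnorm]
      map_mul' := fun q r => by
        show Jc J hJadd hJsmul hJnorm ((cfcHom hΔn) ((star (q * r)).comp ρc))
          = Jc J hJadd hJsmul hJnorm ((cfcHom hΔn) ((star q).comp ρc))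
            * Jc J hJadd hJsmul hJnorm ((cfcHom hΔn) ((star r).comp ρc))
        simp only [star_mul]
        rw [show (star r * star q : C(S, ℂ)) = star q * star r from mul_comm _ _,
          ContinuousMap.mul_comp, map_mul, Jc_mul J hJinv hJadd hJsmul hJnorm]
      map_zero' := by
        show Jc J hJadd hJsmul hJnorm ((cfcHom hΔn) ((star (0 : C(S, ℂ))).comp ρc)) = 0
        rw [star_zero, ContinuousMap.zero_comp, map_zero, Jc_zero J hJadd hJsmul hJnorm]
      map_add' := fun q r => by
        show Jc J hJadd hJsmul hJnorm ((cfcHom hΔn) ((star (q + r)).comp ρc))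
          = Jc J hJadd hJsmul hJnorm ((cfcHom hΔn) ((star q).comp ρc))
            + Jc J hJadd hJsmul hJnorm ((cfcHom hΔn) ((star r).comp ρc))
        rw [star_add, ContinuousMap.add_comp, map_add, Jc_add J hJadd hJsmul hJnorm]
      commutes' := fun c => by
        show Jc J hJadd hJsmul hJnorm ((cfcHom hΔn) ((star (algebraMap ℂ C(S, ℂ) c)).comp ρc))
          = algebraMap ℂ (H →L[ℂ] H) c
        have hsc : star (algebraMap ℂ C(S, ℂ) c) = algebraMap ℂ C(S, ℂ) ((starRingEnd ℂ) c) := by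
          ext z; simp [Complex.star_def]
        have hcc : (algebraMap ℂ C(S, ℂ) ((starRingEnd ℂ) c)).comp ρc
            = algebraMap ℂ C(S, ℂ) ((starRingEnd ℂ) c) := by
          ext z; simp
        rw [hsc, hcc, AlgHomClass.commutes, Jc_algebraMap J hJinv hJadd hJsmul hJnorm]
        simp
      map_star' := fun q => by
        show Jc J hJadd hJsmul hJnorm ((cfcHom hΔn) ((star (star q)).comp ρc))
          = star (Jc J hJadd hJsmul hJnorm ((cfcHom hΔn) ((star q).comp ρc)))
        have h6 : star ((star q).comp ρc) = (star (star q)).comp ρc := by ext z; simp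
        rw [← Jc_star J hJinv hJadd hJsmul hJnorm hJinner, ← map_star, h6] }
    with hψ
  have hψcont : Continuous ψ := by
    have : Continuous fun q : C(S, ℂ) => (star q).comp ρc :=
      (ρc.continuous_precomp).comp continuous_star
    exact (Jc_continuous J hJadd hJsmul hJnorm).comp ((cfcHom_isClosedEmbedding hΔn).continuous.comp this)
  have hψid : ψ ((ContinuousMap.id ℂ).restrict S) = Δ := by
    have hA : (star ((ContinuousMap.id ℂ).restrict S)).comp ρc
        = (⟨fun z : S => (z : ℂ)⁻¹, hcont⟩ : C(S, ℂ)) := by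
      ext z
      show (starRingEnd ℂ) ((z : ℂ)⁻¹) = (z : ℂ)⁻¹
      rw [hreal z z.2, ← Complex.ofReal_inv, Complex.conj_ofReal]
    have hB : cfcHom hΔn (⟨fun z : S => (z : ℂ)⁻¹, hcont⟩ : C(S, ℂ)) = Δinv := by
      have hmul : ((ContinuousMap.id ℂ).restrict S) * (⟨fun z : S => (z : ℂ)⁻¹, hcont⟩ : C(S, ℂ)) = 1 := by
        ext z
        exact mul_inv_cancel₀ (hz0 z z.2)
      have hmul2 : Δ * cfcHom hΔn (⟨fun z : S => (z : ℂ)⁻¹, hcont⟩ : C(S, ℂ)) = 1 := by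
        have h4 : cfcHom hΔn ((ContinuousMap.id ℂ).restrict S)
            * cfcHom hΔn (⟨fun z : S => (z : ℂ)⁻¹, hcont⟩ : C(S, ℂ)) = 1 := by
          rw [← map_mul, hmul, map_one]
        rwa [cfcHom_id hΔn] at h4
      exact (left_inv_eq_right_inv h2 hmul2).symm
    show Jc J hJadd hJsmul hJnorm (cfcHom hΔn _) = Δ
    rw [hA, hB, hJcΔinv]
  have huniq : cfcHom hΔn = ψ :=
    cfcHom_eq_of_continuous_of_map_id hΔn ψ hψcont hψid
  -- conclude
  rw [cfc_apply g Δ hΔn hg]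
  conv_lhs => rw [huniq]
  show Jc J hJadd hJsmul hJnorm (Jc J hJadd hJsmul hJnorm (cfcHom hΔn _)) = _
  have hgb : (star (⟨(spectrum ℂ Δ).domRestrict g, hg.domRestrict⟩ : C(S, ℂ))).comp ρc
      = (⟨(spectrum ℂ Δ).domRestrict g, hg.domRestrict⟩ : C(S, ℂ)) := by
    ext z
    show (starRingEnd ℂ) (g ((z : ℂ)⁻¹)) = g (z : ℂ)
    exact hgc z z.2
  rw [hgb]
  ext x
  simp [hJinv]

variable {H : Type*} [NormedAddCommGroup H] [InnerProductSpace ℂ H] [CompleteSpace H]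

lemma commute_elemental (Δ R : H →L[ℂ] H) (hΔsa : IsSelfAdjoint Δ)
    (hRΔ : R * Δ = Δ * R) :
    ∀ X ∈ StarAlgebra.elemental ℂ Δ, R * X = X * R := by
  intro X hX
  induction hX using StarAlgebra.elemental.induction_on with
  | self => exact hRΔ
  | star_self => rw [hΔsa.star_eq]; exact hRΔ
  | algebraMap r => exact (Algebra.commutes r R).symm
  | add u hu v hv pu pv => rw [mul_add, add_mul, pu, pv]
  | mul u hu v hv pu pv => rw [← mul_assoc, pu, mul_assoc, pv, mul_assoc]
  | closure s hs hP v hv =>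
      have hC : IsClosed {X : H →L[ℂ] H | R * X = X * R} :=
        isClosed_eq (continuous_const.mul continuous_id) (continuous_id.mul continuous_const)
      exact closure_minimal (fun u hu => hP u hu) hC hv

lemma cfcHom_mem_elemental' (Δ : H →L[ℂ] H) (hΔn : IsStarNormal Δ)
    (g : C(spectrum ℂ Δ, ℂ)) : cfcHom hΔn g ∈ StarAlgebra.elemental ℂ Δ := by
  rw [cfcHom_eq_of_isStarNormal]
  exact SetLike.coe_mem _

lemma aux_comm (Δ R : H →L[ℂ] H) (hΔsa : IsSelfAdjoint Δ)
    (hRΔ : R * Δ = Δ * R) (g : ℂ → ℂ) : R * cfc g Δ = cfc g Δ * R := by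
  have hΔn : IsStarNormal Δ := hΔsa.isStarNormal
  by_cases hg : ContinuousOn g (spectrum ℂ Δ)
  · rw [cfc_apply g Δ hΔn hg]
    exact commute_elemental Δ R hΔsa hRΔ _ (cfcHom_mem_elemental' Δ hΔn _)
  · rw [cfc_apply_of_not_continuousOn Δ hg]; simp

end auxKMS

/-- KMS boundary condition for modular-localized vectors. If
`ψ₁, ψ₂` are fixed by the Tomita involution `S = J√Δ` (i.e. `J(√Δ ψⱼ) = ψⱼ`),
with `J` a conjugate-linear isometric involution, `Δ` bounded positive invertible
self-adjoint, `JΔJ = Δ⁻¹`, and `Δ^{it}` defined by continuous functional calculus,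
then `⟨ψ₂, Δ^{it}(Δψ₁)⟩ = ⟨Δ^{it}ψ₁, ψ₂⟩` for all real `t`. -/
theorem stmt_7 {H : Type*} [NormedAddCommGroup H] [InnerProductSpace ℂ H] [CompleteSpace H]
    (J : H → H)
    (hJinv : ∀ x : H, J (J x) = x)
    (hJadd : ∀ x y : H, J (x + y) = J x + J y)
    (hJsmul : ∀ (c : ℂ) (x : H), J (c • x) = (starRingEnd ℂ) c • J x)
    (hJinner : ∀ x y : H, (inner ℂ (J x) (J y) : ℂ) = (starRingEnd ℂ) (inner ℂ x y : ℂ))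
    (Δ Δinv R : H →L[ℂ] H)
    (hΔsa : IsSelfAdjoint Δ)
    (hΔpos : ∀ x : H, 0 ≤ (inner ℂ x (Δ x) : ℂ).re)
    (hΔinv₁ : Δ.comp Δinv = ContinuousLinearMap.id ℂ H)
    (hΔinv₂ : Δinv.comp Δ = ContinuousLinearMap.id ℂ H)
    (hmodular : ∀ x : H, J (Δ (J x)) = Δinv x)
    (hRsa : IsSelfAdjoint R)
    (hRpos : ∀ x : H, 0 ≤ (inner ℂ x (R x) : ℂ).re)
    (hRsq : R.comp R = Δ)
    (ψ₁ ψ₂ : H)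
    (hψ₁ : J (R ψ₁) = ψ₁) (hψ₂ : J (R ψ₂) = ψ₂) :
    ∀ t : ℝ,
      (inner ℂ ψ₂ ((cfc (fun z : ℂ => z ^ (Complex.I * (t : ℂ))) Δ) (Δ ψ₁)) : ℂ) =
        (inner ℂ ((cfc (fun z : ℂ => z ^ (Complex.I * (t : ℂ))) Δ) ψ₁) ψ₂ : ℂ) := by
  intro t
  set f : ℂ → ℂ := fun z : ℂ => z ^ (Complex.I * (t : ℂ)) with hfdef
  have h1 : Δ * Δinv = 1 := hΔinv₁
  have h2 : Δinv * Δ = 1 := hΔinv₂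
  have hRsq' : R * R = Δ := hRsq
  have hΔn : IsStarNormal Δ := hΔsa.isStarNormal
  -- nonnegativity of Δ
  have hΔnn : (0 : H →L[ℂ] H) ≤ Δ := by
    rw [ContinuousLinearMap.nonneg_iff_isPositive]
    refine ⟨hΔsa.isSymmetric, fun x => ?_⟩
    rw [ContinuousLinearMap.reApplyInnerSelf, inner_re_symm]
    simpa using hΔpos x
  -- spectrum facts
  have hz0 : ∀ z ∈ spectrum ℂ Δ, z ≠ 0 := by
    intro z hz h0
    exact spectrum.zero_notMem ℂ (isUnit_iff_exists.mpr ⟨Δinv, h1, h2⟩) (h0 ▸ hz)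
  have hreal : ∀ z ∈ spectrum ℂ Δ, z = (z.re : ℂ) := fun z hz => hΔsa.mem_spectrum_eq_re hz
  have hposre : ∀ z ∈ spectrum ℂ Δ, 0 < z.re := by
    intro z hz
    have h3 : z.re ∈ spectrum ℝ Δ := by
      have hz' := hz
      rw [hreal z hz] at hz'
      exact spectrum.of_algebraMap_mem ℂ hz'
    have h4 : 0 ≤ z.re :=
      (StarOrderedRing.nonneg_iff_spectrum_nonneg (R := ℝ) Δ hΔsa).mp hΔnn z.re h3
    rcases h4.lt_or_eq with h | h
    · exact h
    · exfalso; apply hz0 z hz; rw [hreal z hz, ← h]; simp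
  -- continuity of f on the spectrum
  have hf : ContinuousOn f (spectrum ℂ Δ) := fun z hz =>
    (continuousAt_cpow_const
      (Complex.mem_slitPlane_iff.mpr (Or.inl (hposre z hz)))).continuousWithinAt
  -- the conjugation property of f on the spectrum
  have hgc : ∀ z ∈ spectrum ℂ Δ, (starRingEnd ℂ) (f z⁻¹) = f z := by
    intro z hz
    have him : z = (z.re : ℂ) := hreal z hz
    have hre : 0 < z.re := hposre z hz
    have harg : z.arg ≠ Real.pi := by
      rw [him, Complex.arg_ofReal_of_nonneg hre.le]
      exact fun h => Real.pi_ne_zero h.symm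
    have hconjz : (starRingEnd ℂ) z = z := by rw [him]; exact Complex.conj_ofReal _
    have hcn : (starRingEnd ℂ) (starRingEnd ℂ (Complex.I * (t : ℂ))) = Complex.I * (t : ℂ) := by
      simp
    show (starRingEnd ℂ) (z⁻¹ ^ (Complex.I * (t : ℂ))) = z ^ (Complex.I * (t : ℂ))
    rw [Complex.inv_cpow _ _ harg, map_inv₀]
    have h := Complex.conj_cpow z ((starRingEnd ℂ) (Complex.I * (t : ℂ))) harg
    rw [hconjz, hcn] at h
    rw [← h]
    have hneg : (starRingEnd ℂ) (Complex.I * (t : ℂ)) = -(Complex.I * (t : ℂ)) := by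
      simp [Complex.ext_iff]
    rw [hneg, Complex.cpow_neg, inv_inv]
  -- antiunitarity of J
  have hJnorm : ∀ x : H, ‖J x‖ = ‖x‖ := by
    intro x
    have h3 : (inner ℂ (J x) (J x) : ℂ) = inner ℂ x x := by
      rw [hJinner x x, inner_self_conj]
    rw [norm_eq_sqrt_re_inner (𝕜 := ℂ) (J x), norm_eq_sqrt_re_inner (𝕜 := ℂ) x, h3]
  -- the two key operator identities
  have hconjU : Jc J hJadd hJsmul hJnorm (cfc f Δ) = cfc f Δ :=
    aux_conj J hJinv hJadd hJsmul hJnorm hJinner Δ Δinv hΔsa h1 h2 hmodular f hf hgc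
  have hRΔ : R * Δ = Δ * R := by rw [← hRsq']; exact (mul_assoc R R R).symm
  have hcomm : R * cfc f Δ = cfc f Δ * R := aux_comm Δ R hΔsa hRΔ f
  -- the fixed-point identities
  have hRψ₁ : R ψ₁ = J ψ₁ := by
    have h3 := congrArg J hψ₁
    rwa [hJinv] at h3
  have hRψ₂ : R ψ₂ = J ψ₂ := by
    have h3 := congrArg J hψ₂
    rwa [hJinv] at h3
  have hUJ : (cfc f Δ) (J ψ₁) = J ((cfc f Δ) ψ₁) := by
    have h3 : J ((cfc f Δ) (J ψ₁)) = (cfc f Δ) ψ₁ := congrArg (fun T => T ψ₁) hconjU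
    have h4 := congrArg J h3
    rwa [hJinv] at h4
  have hΔψ₁ : Δ ψ₁ = R (J ψ₁) := by
    rw [← hRsq]
    show (R.comp R) ψ₁ = R (J ψ₁)
    rw [ContinuousLinearMap.comp_apply, hRψ₁]
  have hswap : R ((cfc f Δ) (J ψ₁)) = (cfc f Δ) (R (J ψ₁)) := by
    have h3 := congrArg (fun T => T (J ψ₁)) hcomm
    simpa [ContinuousLinearMap.mul_apply] using h3
  have hadjR : ∀ x y : H, (inner ℂ x (R y) : ℂ) = inner ℂ (R x) y := by
    intro x y
    have h3 := ContinuousLinearMap.isSelfAdjoint_iff'.mp hRsa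
    conv_lhs => rw [← h3]
    rw [ContinuousLinearMap.adjoint_inner_right]
  calc (inner ℂ ψ₂ ((cfc f Δ) (Δ ψ₁)) : ℂ)
      = inner ℂ ψ₂ ((cfc f Δ) (R (J ψ₁))) := by rw [hΔψ₁]
    _ = inner ℂ ψ₂ (R ((cfc f Δ) (J ψ₁))) := by rw [hswap]
    _ = inner ℂ (R ψ₂) ((cfc f Δ) (J ψ₁)) := hadjR _ _
    _ = inner ℂ (J ψ₂) (J ((cfc f Δ) ψ₁)) := by rw [hRψ₂, hUJ]
    _ = (starRingEnd ℂ) (inner ℂ ψ₂ ((cfc f Δ) ψ₁)) := hJinner _ _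
    _ = inner ℂ ((cfc f Δ) ψ₁) ψ₂ := inner_conj_symm _ _
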